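/- Let A be a Banach algebra with a left bounded approximate identity which is a two-sided ideal in A**, and suppose every continuous derivation D : A** → A*** is weak*-weak*-continuous. If A is weakly amenable, then A** (with the first Arens product) is weakly amenable. -/

import Mathlib

/-!
Common definitions: duals, biduals, Arens products, module actions,
derivations, first cohomology-vanishing predicates, weak-star continuity.
-/

noncomputable section

open ContinuousLinearMap Filter Topology Function

namespace ArensPaper

variable (𝕜 : Type) [RCLike 𝕜]

/-- The (topological) dual of a normed space. -/
abbrev Du (X : Type) [NormedAddCommGroup X] [NormedSpace 𝕜 X] : Type :=
  StrongDual 𝕜 X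

/-- The bidual of a normed space. -/
abbrev Bi (X : Type) [NormedAddCommGroup X] [NormedSpace 𝕜 X] : Type :=
  Du 𝕜 (Du 𝕜 X)

/-- Canonical embedding of a normed space into its bidual. -/
abbrev inDu (X : Type) [NormedAddCommGroup X] [NormedSpace 𝕜 X] : X →L[𝕜] Bi 𝕜 X :=
  NormedSpace.inclusionInDoubleDual 𝕜 X

variable {X Y Z : Type} [NormedAddCommGroup X] [NormedSpace 𝕜 X]
  [NormedAddCommGroup Y] [NormedSpace 𝕜 Y] [NormedAddCommGroup Z] [NormedSpace 𝕜 Z]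

/-- The transpose (Banach-space adjoint) of a continuous linear map. -/
def tr (T : X →L[𝕜] Y) : Du 𝕜 Y →L[𝕜] Du 𝕜 X :=
  (compL 𝕜 X Y 𝕜).flip T

/-- The second transpose of a continuous linear map. -/
def bitr (T : X →L[𝕜] Y) : Bi 𝕜 X →L[𝕜] Bi 𝕜 Y :=
  tr 𝕜 (tr 𝕜 T)

/-- The adjoint of a continuous bilinear map `m : X × Y → Z`:
`⟨adj m z' x, y⟩ = ⟨z', m x y⟩`. -/
def adj (m : X →L[𝕜] Y →L[𝕜] Z) : Du 𝕜 Z →L[𝕜] X →L[𝕜] Du 𝕜 Y :=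
  ((compL 𝕜 X (Y →L[𝕜] Z) (Du 𝕜 Y)).flip m).comp (compL 𝕜 Y Z 𝕜)

/-- The first Arens (triple adjoint) extension of a continuous bilinear map
to the biduals: `⟨ar1 m F G, z'⟩ = ⟨F, fun x => ⟨G, fun y => ⟨z', m x y⟩⟩⟩`. -/
def ar1 (m : X →L[𝕜] Y →L[𝕜] Z) : Bi 𝕜 X →L[𝕜] Bi 𝕜 Y →L[𝕜] Bi 𝕜 Z :=
  adj 𝕜 (adj 𝕜 (adj 𝕜 m))

/-- The second Arens extension of a continuous bilinear map. -/
def ar2 (m : X →L[𝕜] Y →L[𝕜] Z) : Bi 𝕜 X →L[𝕜] Bi 𝕜 Y →L[𝕜] Bi 𝕜 Z :=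
  (ar1 𝕜 m.flip).flip

/-- A continuous bilinear map is Arens regular if its two Arens extensions agree. -/
def ArensRegularBil (m : X →L[𝕜] Y →L[𝕜] Z) : Prop :=
  ar1 𝕜 m = ar2 𝕜 m

/-- A map between dual spaces is weak*-weak*-continuous. -/
def WStarCont (f : Du 𝕜 X → Du 𝕜 Y) : Prop :=
  Continuous fun x : WeakDual 𝕜 X => (show WeakDual 𝕜 Y from f (show Du 𝕜 X from x))

/-- A map from a dual space to a normed space is weak*-weak-continuous. -/
def WStarWeakCont {B : Type} [NormedAddCommGroup B] [NormedSpace 𝕜 B]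
    (f : Du 𝕜 X → B) : Prop :=
  Continuous fun x : WeakDual 𝕜 X => (show WeakSpace 𝕜 B from f (show Du 𝕜 X from x))

/-- `D` is a derivation with respect to a product `p` on `C` and module actions
`l`, `r` of `C` on `E`. -/
def IsDer {C E : Type} [NormedAddCommGroup C] [NormedSpace 𝕜 C]
    [NormedAddCommGroup E] [NormedSpace 𝕜 E]
    (p : C → C → C) (l : C → E → E) (r : E → C → E) (D : C →L[𝕜] E) : Prop :=
  ∀ a b : C, D (p a b) = l a (D b) + r (D a) b

/-- `D` is an inner derivation for the module actions `l`, `r`. -/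
def IsInner {C E : Type} [NormedAddCommGroup C] [NormedSpace 𝕜 C]
    [NormedAddCommGroup E] [NormedSpace 𝕜 E]
    (l : C → E → E) (r : E → C → E) (D : C →L[𝕜] E) : Prop :=
  ∃ x : E, ∀ a : C, D a = l a x - r x a

/-- A Banach algebra has a left bounded approximate identity. -/
def HasLBAI (A : Type) [NonUnitalNormedRing A] : Prop :=
  ∃ (ι : Type) (L : Filter ι) (e : ι → A), L.NeBot ∧ (∃ c : ℝ, ∀ i, ‖e i‖ ≤ c) ∧
    ∀ a : A, Tendsto (fun i => e i * a) L (𝓝 a)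

/-- A Banach bimodule structure on `E` over the "Banach algebra" `(C, p)`. -/
structure BimodStr {C : Type} [NormedAddCommGroup C] [NormedSpace 𝕜 C]
    (p : C →L[𝕜] C →L[𝕜] C) (E : Type) [NormedAddCommGroup E] [NormedSpace 𝕜 E] :
    Type where
  l : C →L[𝕜] E →L[𝕜] E
  r : E →L[𝕜] C →L[𝕜] E
  l_mul : ∀ a b x, l (p a b) x = l a (l b x)
  r_mul : ∀ x a b, r (r x a) b = r x (p a b)
  lr : ∀ a x b, r (l a x) b = l a (r x b)

/-- A bundled Banach bimodule over the "Banach algebra" `(C, p)`. -/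
structure BBimod {C : Type} [NormedAddCommGroup C] [NormedSpace 𝕜 C]
    (p : C →L[𝕜] C →L[𝕜] C) : Type 1 where
  E : Type
  [grp : NormedAddCommGroup E]
  [mod : NormedSpace 𝕜 E]
  [cpl : CompleteSpace E]
  str : BimodStr 𝕜 p E

attribute [instance] BBimod.grp BBimod.mod BBimod.cpl

/-- Amenability of the "Banach algebra" `(C, p)`: every continuous derivation into the
dual of any Banach bimodule is inner. -/
def IsAmenableP {C : Type} [NormedAddCommGroup C] [NormedSpace 𝕜 C]
    (p : C →L[𝕜] C →L[𝕜] C) : Prop :=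
  ∀ (M : BBimod 𝕜 p) (D : C →L[𝕜] Du 𝕜 M.E),
    IsDer 𝕜 (fun a b => p a b)
      (fun a f => f.comp (M.str.r.flip a)) (fun f a => f.comp (M.str.l a)) D →
    IsInner 𝕜 (fun a f => f.comp (M.str.r.flip a)) (fun f a => f.comp (M.str.l a)) D

/-- Weak amenability of a Banach algebra: every continuous derivation into the dual
(with the dual actions of the regular bimodule) is inner. -/
def WeaklyAmenable (A : Type) [NonUnitalNormedRing A] [NormedSpace 𝕜 A]
    [IsScalarTower 𝕜 A A] [SMulCommClass 𝕜 A A] : Prop :=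
  ∀ D : A →L[𝕜] Du 𝕜 A,
    IsDer 𝕜 (fun a b => a * b)
      (fun a f => f.comp ((ContinuousLinearMap.mul 𝕜 A).flip a))
      (fun f a => f.comp (ContinuousLinearMap.mul 𝕜 A a)) D →
    IsInner 𝕜 (fun a f => f.comp ((ContinuousLinearMap.mul 𝕜 A).flip a))
      (fun f a => f.comp (ContinuousLinearMap.mul 𝕜 A a)) D

/-- The embedding of the predual `X` into the dual `A*`, given an identification
`j : A ≃ X*`. -/
def predualEmbed {A X : Type} [NormedAddCommGroup A] [NormedSpace 𝕜 A]
    [NormedAddCommGroup X] [NormedSpace 𝕜 X] (j : A ≃ₗᵢ[𝕜] Du 𝕜 X) (x : X) : Du 𝕜 A :=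
  (inDu 𝕜 X x).comp j.toLinearIsometry.toContinuousLinearMap

/-- `j : A ≃ X*` makes `A` a dual Banach algebra: the image of `X` in `A*` is a
submodule of `A*` for the dual actions. -/
def IsDualBanachAlgebra {A X : Type} [NonUnitalNormedRing A] [NormedSpace 𝕜 A]
    [IsScalarTower 𝕜 A A] [SMulCommClass 𝕜 A A]
    [NormedAddCommGroup X] [NormedSpace 𝕜 X] (j : A ≃ₗᵢ[𝕜] Du 𝕜 X) : Prop :=
  ∀ (a : A) (x : X),
    ((predualEmbed 𝕜 j x).comp ((ContinuousLinearMap.mul 𝕜 A).flip a)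
        ∈ Set.range (predualEmbed 𝕜 j)) ∧
    ((predualEmbed 𝕜 j x).comp (ContinuousLinearMap.mul 𝕜 A a)
        ∈ Set.range (predualEmbed 𝕜 j))

/-- A normed space is weakly sequentially complete. -/
def WSCSpace (E : Type) [NormedAddCommGroup E] [NormedSpace 𝕜 E] : Prop :=
  ∀ f : ℕ → E,
    (∀ φ : Du 𝕜 E, ∃ L : 𝕜, Tendsto (fun n => φ (f n)) atTop (𝓝 L)) →
    ∃ e : E, ∀ φ : Du 𝕜 E, Tendsto (fun n => φ (f n)) atTop (𝓝 (φ e))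

/-- Left multiplication by `a ∈ A` restricted to an ideal `I`. -/
def mulLRes {A : Type} [NonUnitalNormedRing A] [NormedSpace 𝕜 A]
    [IsScalarTower 𝕜 A A] [SMulCommClass 𝕜 A A] (I : Submodule 𝕜 A) (a : A)
    (h : ∀ x : I, a * (x : A) ∈ I) : I →L[𝕜] I :=
  ((ContinuousLinearMap.mul 𝕜 A a).comp I.subtypeL).codRestrict I h

/-- Right multiplication by `a ∈ A` restricted to an ideal `I`. -/
def mulRRes {A : Type} [NonUnitalNormedRing A] [NormedSpace 𝕜 A]
    [IsScalarTower 𝕜 A A] [SMulCommClass 𝕜 A A] (I : Submodule 𝕜 A) (a : A)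
    (h : ∀ x : I, (x : A) * a ∈ I) : I →L[𝕜] I :=
  (((ContinuousLinearMap.mul 𝕜 A).flip a).comp I.subtypeL).codRestrict I h


/-- Connes-amenability of the bidual algebra `(A**, p)`: every weak*-weak*-continuous
derivation into a normal dual Banach bimodule is inner. -/
def ConnesAmenableBidual {A : Type} [NonUnitalNormedRing A] [NormedSpace 𝕜 A]
    [IsScalarTower 𝕜 A A] [SMulCommClass 𝕜 A A]
    (p : Bi 𝕜 A →L[𝕜] Bi 𝕜 A →L[𝕜] Bi 𝕜 A) : Prop :=
  ∀ (X : Type) [NormedAddCommGroup X] [NormedSpace 𝕜 X] [CompleteSpace X]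
    (M : BimodStr 𝕜 p (Du 𝕜 X)),
    (∀ f : Du 𝕜 X, WStarCont 𝕜 (fun m : Bi 𝕜 A => M.l m f) ∧
        WStarCont 𝕜 (fun m : Bi 𝕜 A => M.r f m)) →
    ∀ D : Bi 𝕜 A →L[𝕜] Du 𝕜 X,
      IsDer 𝕜 (fun m n => p m n) (fun m f => M.l m f) (fun f m => M.r f m) D →
      WStarCont 𝕜 (fun m => D m) →
      IsInner 𝕜 (fun m f => M.l m f) (fun f m => M.r f m) D


/-! ### Auxiliary lemmas for Statement 6 -/

section Statement6Aux

variable {𝕜 : Type} [RCLike 𝕜] {A : Type}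
  [NonUnitalNormedRing A] [NormedSpace 𝕜 A] [IsScalarTower 𝕜 A A]
  [SMulCommClass 𝕜 A A]

/-- The canonical embedding into the bidual is multiplicative for the first Arens product. -/
lemma aux_inDu_mul (a b : A) :
    ar1 𝕜 (ContinuousLinearMap.mul 𝕜 A) (inDu 𝕜 A a) (inDu 𝕜 A b) = inDu 𝕜 A (a * b) := by
  ext f; rfl

lemma aux_adj_swap (H : Bi 𝕜 A) (f : Du 𝕜 A) (a : A) :
    adj 𝕜 (ContinuousLinearMap.mul 𝕜 A)
        (adj 𝕜 (adj 𝕜 (ContinuousLinearMap.mul 𝕜 A)) H f) a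
      = adj 𝕜 (adj 𝕜 (ContinuousLinearMap.mul 𝕜 A)) H
          (adj 𝕜 (ContinuousLinearMap.mul 𝕜 A) f a) := by
  ext b
  show H (adj 𝕜 (ContinuousLinearMap.mul 𝕜 A) f (a * b))
      = H (adj 𝕜 (ContinuousLinearMap.mul 𝕜 A)
            (adj 𝕜 (ContinuousLinearMap.mul 𝕜 A) f a) b)
  congr 1
  ext c
  show f ((a * b) * c) = f (a * (b * c))
  rw [mul_assoc]

/-- The first Arens product is associative. -/
lemma aux_ar1_assoc (F G H : Bi 𝕜 A) :
    ar1 𝕜 (ContinuousLinearMap.mul 𝕜 A) (ar1 𝕜 (ContinuousLinearMap.mul 𝕜 A) F G) H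
      = ar1 𝕜 (ContinuousLinearMap.mul 𝕜 A) F (ar1 𝕜 (ContinuousLinearMap.mul 𝕜 A) G H) := by
  ext f
  show F (adj 𝕜 (adj 𝕜 (ContinuousLinearMap.mul 𝕜 A)) G
          (adj 𝕜 (adj 𝕜 (ContinuousLinearMap.mul 𝕜 A)) H f))
      = F (adj 𝕜 (adj 𝕜 (ContinuousLinearMap.mul 𝕜 A))
          (ar1 𝕜 (ContinuousLinearMap.mul 𝕜 A) G H) f)
  congr 1
  ext a
  show G (adj 𝕜 (ContinuousLinearMap.mul 𝕜 A)
          (adj 𝕜 (adj 𝕜 (ContinuousLinearMap.mul 𝕜 A)) H f) a)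
      = G (adj 𝕜 (adj 𝕜 (ContinuousLinearMap.mul 𝕜 A)) H
          (adj 𝕜 (ContinuousLinearMap.mul 𝕜 A) f a))
  rw [aux_adj_swap]

/-- Helly-type lemma: an element of the bidual agrees with an element of `A` on
any finite set of functionals. -/
lemma aux_helly (m : Bi 𝕜 A) (s : Finset (Du 𝕜 A)) : ∃ a : A, ∀ g ∈ s, g a = m g := by
  classical
  let T : A →ₗ[𝕜] (↥s → 𝕜) := LinearMap.pi fun g => ((g : Du 𝕜 A) : A →ₗ[𝕜] 𝕜)
  let w : ↥s → 𝕜 := fun g => m (g : Du 𝕜 A)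
  have hw : w ∈ LinearMap.range T := by
    by_contra hnot
    set q := (LinearMap.range T).mkQ with hq
    have hqw : q w ≠ 0 := by
      simpa [q, Submodule.Quotient.mk_eq_zero] using hnot
    obtain ⟨φ, hφ⟩ : ∃ φ : Module.Dual 𝕜 ((↥s → 𝕜) ⧸ LinearMap.range T), φ (q w) ≠ 0 := by
      by_contra hall
      push_neg at hall
      exact hqw ((Module.forall_dual_apply_eq_zero_iff 𝕜 (q w)).mp hall)
    set ψ : (↥s → 𝕜) →ₗ[𝕜] 𝕜 := φ.comp q with hψ
    have hψT : ∀ a : A, ψ (T a) = 0 := by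
      intro a
      have : q (T a) = 0 := (Submodule.Quotient.mk_eq_zero _).mpr ⟨a, rfl⟩
      simp [ψ, this]
    set c : ↥s → 𝕜 := fun g => ψ fun j => if g = j then 1 else 0 with hc
    set G : Du 𝕜 A := ∑ g : ↥s, c g • (g : Du 𝕜 A) with hG
    have hG0 : G = 0 := by
      ext a
      have h1 : ψ (T a) = ∑ g : ↥s, (T a) g • c g := LinearMap.pi_apply_eq_sum_univ ψ (T a)
      have h2 : G a = ∑ g : ↥s, c g * (g : Du 𝕜 A) a := by
        simp [G, ContinuousLinearMap.sum_apply, ContinuousLinearMap.smul_apply,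
          smul_eq_mul]
      have h3 : (0 : 𝕜) = ψ (T a) := (hψT a).symm
      rw [h2, ContinuousLinearMap.zero_apply, h3, h1]
      refine Finset.sum_congr rfl fun g _ => ?_
      have : (T a) g = (g : Du 𝕜 A) a := rfl
      rw [this, smul_eq_mul, mul_comm]
    have hmG : m G = ψ w := by
      have h1 : ψ w = ∑ g : ↥s, w g • c g := LinearMap.pi_apply_eq_sum_univ ψ w
      have h2 : m G = ∑ g : ↥s, c g * m (g : Du 𝕜 A) := by
        rw [hG, map_sum]
        refine Finset.sum_congr rfl fun g _ => ?_
        rw [map_smul, smul_eq_mul]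
      rw [h1, h2]
      refine Finset.sum_congr rfl fun g _ => ?_
      rw [smul_eq_mul, mul_comm]
    rw [hG0, map_zero] at hmG
    exact hφ hmG.symm
  obtain ⟨a, ha⟩ := hw
  refine ⟨a, fun g hg => ?_⟩
  have := congrFun ha ⟨g, hg⟩
  exact this

/-- A weak*-weak*-continuous linear map `A** → A***` vanishing on (the image of) `A`
vanishes identically: the image of `A` is weak*-dense in `A**`. -/
lemma aux_dense_vanish (E' : Bi 𝕜 A →L[𝕜] Du 𝕜 (Bi 𝕜 A))
    (hc : WStarCont 𝕜 fun m : Bi 𝕜 A => E' m)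
    (h0 : ∀ a : A, E' (inDu 𝕜 A a) = 0) (m : Bi 𝕜 A) : E' m = 0 := by
  ext n
  rw [ContinuousLinearMap.zero_apply]
  have hφ : Continuous fun x : WeakDual 𝕜 (Du 𝕜 A) =>
      (E' (x : Du 𝕜 (Du 𝕜 A))) n := (WeakDual.eval_continuous n).comp hc
  by_contra hne
  have hε : 0 < ‖(E' m) n‖ := norm_pos_iff.mpr hne
  have hU : (fun x : WeakDual 𝕜 (Du 𝕜 A) => (E' (x : Du 𝕜 (Du 𝕜 A))) n) ⁻¹'
      Metric.ball ((E' m) n) ‖(E' m) n‖ ∈ 𝓝 (show WeakDual 𝕜 (Du 𝕜 A) from m) :=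
    hφ.continuousAt.preimage_mem_nhds (Metric.ball_mem_nhds _ hε)
  have hind : IsInducing (fun (x : WeakDual 𝕜 (Du 𝕜 A)) (y : Du 𝕜 A) => x y) := ⟨rfl⟩
  rw [hind.nhds_eq_comap, Filter.mem_comap] at hU
  obtain ⟨T, hT, hTsub⟩ := hU
  rw [nhds_pi, Filter.mem_pi] at hT
  obtain ⟨I, hIfin, t, ht, hsub⟩ := hT
  obtain ⟨a, ha⟩ := aux_helly m hIfin.toFinset
  have hmem : (fun y : Du 𝕜 A => (show WeakDual 𝕜 (Du 𝕜 A) from inDu 𝕜 A a) y) ∈ I.pi t := by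
    intro g hg
    have hga : (inDu 𝕜 A a) g = m g := ha g (hIfin.mem_toFinset.mpr hg)
    show (inDu 𝕜 A a) g ∈ t g
    rw [hga]
    exact mem_of_mem_nhds (ht g)
  have hball : (E' (inDu 𝕜 A a)) n ∈ Metric.ball ((E' m) n) ‖(E' m) n‖ :=
    hTsub (hsub hmem)
  rw [h0 a, ContinuousLinearMap.zero_apply, Metric.mem_ball, dist_zero_left] at hball
  exact lt_irrefl _ hball

end Statement6Aux
set_option maxHeartbeats 2000000 in
/-- Let `A` be a Banach algebra with a LBAI which is a two-sided ideal in `A**`, and suppose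
every continuous derivation `D : A** → A***` is weak*-weak*-continuous.  If `A` is
weakly amenable, then `A**` (first Arens product) is weakly amenable. -/
theorem statement6 {𝕜 : Type} [RCLike 𝕜] {A : Type}
    [NonUnitalNormedRing A] [NormedSpace 𝕜 A] [IsScalarTower 𝕜 A A]
    [SMulCommClass 𝕜 A A] [CompleteSpace A]
    -- `A` has a left bounded approximate identity
    (hbai : HasLBAI A)
    -- `A` is a two-sided ideal in `A**`
    (hideal : ∀ (m : Bi 𝕜 A) (a : A),
      ar1 𝕜 (ContinuousLinearMap.mul 𝕜 A) m (inDu 𝕜 A a) ∈ Set.range (inDu 𝕜 A) ∧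
      ar1 𝕜 (ContinuousLinearMap.mul 𝕜 A) (inDu 𝕜 A a) m ∈ Set.range (inDu 𝕜 A))
    -- every continuous derivation `D : A** → A***` is weak*-weak*-continuous
    (hwc : ∀ D : Bi 𝕜 A →L[𝕜] Du 𝕜 (Bi 𝕜 A),
      IsDer 𝕜 (fun m n => ar1 𝕜 (ContinuousLinearMap.mul 𝕜 A) m n)
        (fun (m : Bi 𝕜 A) (F : Du 𝕜 (Bi 𝕜 A)) =>
          F.comp ((ar1 𝕜 (ContinuousLinearMap.mul 𝕜 A)).flip m))
        (fun (F : Du 𝕜 (Bi 𝕜 A)) (m : Bi 𝕜 A) =>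
          F.comp (ar1 𝕜 (ContinuousLinearMap.mul 𝕜 A) m)) D →
      WStarCont 𝕜 fun m => D m)
    -- `A` is weakly amenable
    (hwa : WeaklyAmenable 𝕜 A) :
    -- `A**` is weakly amenable
    ∀ D : Bi 𝕜 A →L[𝕜] Du 𝕜 (Bi 𝕜 A),
      IsDer 𝕜 (fun m n => ar1 𝕜 (ContinuousLinearMap.mul 𝕜 A) m n)
        (fun (m : Bi 𝕜 A) (F : Du 𝕜 (Bi 𝕜 A)) =>
          F.comp ((ar1 𝕜 (ContinuousLinearMap.mul 𝕜 A)).flip m))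
        (fun (F : Du 𝕜 (Bi 𝕜 A)) (m : Bi 𝕜 A) =>
          F.comp (ar1 𝕜 (ContinuousLinearMap.mul 𝕜 A) m)) D →
      IsInner 𝕜
        (fun (m : Bi 𝕜 A) (F : Du 𝕜 (Bi 𝕜 A)) =>
          F.comp ((ar1 𝕜 (ContinuousLinearMap.mul 𝕜 A)).flip m))
        (fun (F : Du 𝕜 (Bi 𝕜 A)) (m : Bi 𝕜 A) =>
          F.comp (ar1 𝕜 (ContinuousLinearMap.mul 𝕜 A) m)) D := by
  intro D hD
  set P := ar1 𝕜 (ContinuousLinearMap.mul 𝕜 A) with hP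
  -- the restricted derivation `d : A → A*`
  set d : A →L[𝕜] Du 𝕜 A := (tr 𝕜 (inDu 𝕜 A)).comp (D.comp (inDu 𝕜 A)) with hddef
  have hdapp : ∀ a b : A, d a b = D (inDu 𝕜 A a) (inDu 𝕜 A b) := fun a b => rfl
  have hmul : ∀ a b : A, P (inDu 𝕜 A a) (inDu 𝕜 A b) = inDu 𝕜 A (a * b) :=
    fun a b => aux_inDu_mul a b
  have hassoc : ∀ F G H : Bi 𝕜 A, P (P F G) H = P F (P G H) := aux_ar1_assoc
  -- scalar form of the derivation identity for `D`
  have hDs : ∀ m n k : Bi 𝕜 A, D (P m n) k = D n (P k m) + D m (P n k) := by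
    intro m n k
    have h1 := ContinuousLinearMap.ext_iff.mp (hD m n) k
    simpa only [ContinuousLinearMap.add_apply, ContinuousLinearMap.comp_apply,
      ContinuousLinearMap.flip_apply] using h1
  -- `d` is a derivation on `A`
  have hder_d : IsDer 𝕜 (fun a b : A => a * b)
      (fun a f => f.comp ((ContinuousLinearMap.mul 𝕜 A).flip a))
      (fun f a => f.comp (ContinuousLinearMap.mul 𝕜 A a)) d := by
    intro a b
    ext c
    simp only [ContinuousLinearMap.add_apply, ContinuousLinearMap.comp_apply,
      ContinuousLinearMap.flip_apply, ContinuousLinearMap.mul_apply']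
    calc d (a * b) c = D (P (inDu 𝕜 A a) (inDu 𝕜 A b)) (inDu 𝕜 A c) := by
          rw [hdapp, ← hmul]
      _ = D (inDu 𝕜 A b) (P (inDu 𝕜 A c) (inDu 𝕜 A a))
            + D (inDu 𝕜 A a) (P (inDu 𝕜 A b) (inDu 𝕜 A c)) := hDs _ _ _
      _ = d b (c * a) + d a (b * c) := by rw [hmul, hmul, ← hdapp, ← hdapp]
  -- weak amenability of `A` makes `d` inner
  obtain ⟨f, hf⟩ := hwa d hder_d
  have hfs : ∀ a b : A, d a b = f (b * a) - f (a * b) := by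
    intro a b
    rw [hf a]
    simp only [ContinuousLinearMap.sub_apply, ContinuousLinearMap.comp_apply,
      ContinuousLinearMap.flip_apply, ContinuousLinearMap.mul_apply']
  -- the implementing element and the associated inner derivation
  set F₀ : Du 𝕜 (Bi 𝕜 A) := inDu 𝕜 (Du 𝕜 A) f with hF₀def
  have hF₀ : ∀ c : A, F₀ (inDu 𝕜 A c) = f c := fun c => rfl
  set δ : Bi 𝕜 A →L[𝕜] Du 𝕜 (Bi 𝕜 A) :=
    ((compL 𝕜 (Bi 𝕜 A) (Bi 𝕜 A) 𝕜 F₀).comp P.flip)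
      - ((compL 𝕜 (Bi 𝕜 A) (Bi 𝕜 A) 𝕜 F₀).comp P) with hδdef
  have hδapp : ∀ m : Bi 𝕜 A, δ m = F₀.comp (P.flip m) - F₀.comp (P m) := fun m => rfl
  have hδs : ∀ m k : Bi 𝕜 A, δ m k = F₀ (P k m) - F₀ (P m k) := by
    intro m k
    rw [hδapp]
    simp only [ContinuousLinearMap.sub_apply, ContinuousLinearMap.comp_apply,
      ContinuousLinearMap.flip_apply]
  -- the corrected derivation `E := D - δ`
  set E : Bi 𝕜 A →L[𝕜] Du 𝕜 (Bi 𝕜 A) := D - δ with hEdef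
  have hEs : ∀ m : Bi 𝕜 A, E m = D m - δ m := fun m => rfl
  have hEder : IsDer 𝕜 (fun m n => P m n)
      (fun (m : Bi 𝕜 A) (F : Du 𝕜 (Bi 𝕜 A)) => F.comp (P.flip m))
      (fun (F : Du 𝕜 (Bi 𝕜 A)) (m : Bi 𝕜 A) => F.comp (P m)) E := by
    intro m n
    ext k
    simp only [ContinuousLinearMap.add_apply, ContinuousLinearMap.comp_apply,
      ContinuousLinearMap.flip_apply, hEs, ContinuousLinearMap.sub_apply]
    rw [hDs, hδs, hδs, hδs, ← hassoc k m n, hassoc m n k, ← hassoc n k m]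
    abel
  -- `E` kills the image of `A` against the image of `A`
  have hEscalar : ∀ a b : A, E (inDu 𝕜 A a) (inDu 𝕜 A b) = 0 := by
    intro a b
    have h1 : E (inDu 𝕜 A a) (inDu 𝕜 A b)
        = D (inDu 𝕜 A a) (inDu 𝕜 A b) - δ (inDu 𝕜 A a) (inDu 𝕜 A b) := rfl
    rw [h1, hδs, hmul, hmul, hF₀, hF₀, ← hdapp, hfs]
    abel
  -- hence `E` kills `inDu (A * A)` entirely, by the ideal property
  have hE2 : ∀ a b : A, E (inDu 𝕜 A (a * b)) = 0 := by
    intro a b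
    ext k
    have h1 : E (inDu 𝕜 A (a * b)) k = E (P (inDu 𝕜 A a) (inDu 𝕜 A b)) k := by rw [hmul]
    have h2 := ContinuousLinearMap.ext_iff.mp (hEder (inDu 𝕜 A a) (inDu 𝕜 A b)) k
    simp only [ContinuousLinearMap.add_apply, ContinuousLinearMap.comp_apply,
      ContinuousLinearMap.flip_apply] at h2
    rw [ContinuousLinearMap.zero_apply, h1, h2]
    obtain ⟨c1, hc1⟩ := (hideal k a).1
    obtain ⟨c2, hc2⟩ := (hideal k b).2
    rw [← hc1, ← hc2, hEscalar, hEscalar, add_zero]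
  -- the LBAI gives density of `A * A`, so `E` kills all of `inDu A`
  obtain ⟨ιt, L, e, hne, -, hconv⟩ := hbai
  have hEA : ∀ a : A, E (inDu 𝕜 A a) = 0 := by
    intro a
    haveI := hne
    have hcont : Continuous fun x : A => E (inDu 𝕜 A x) :=
      E.continuous.comp (inDu 𝕜 A).continuous
    have h1 : Tendsto (fun j => E (inDu 𝕜 A (e j * a))) L (𝓝 (E (inDu 𝕜 A a))) :=
      (hcont.tendsto a).comp (hconv a)
    have h2 : (fun j => E (inDu 𝕜 A (e j * a))) = fun _ => (0 : Du 𝕜 (Bi 𝕜 A)) :=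
      funext fun j => hE2 (e j) a
    rw [h2] at h1
    exact tendsto_nhds_unique h1 tendsto_const_nhds
  -- `E` is weak*-weak*-continuous, hence vanishes by weak*-density of `A` in `A**`
  have hwstar := hwc E hEder
  have hE0 : ∀ m : Bi 𝕜 A, E m = 0 := fun m => aux_dense_vanish E hwstar hEA m
  -- conclude: `D` is the inner derivation implemented by `F₀`
  refine ⟨F₀, fun m => ?_⟩
  have h' : D m - δ m = 0 := by rw [← hEs]; exact hE0 m
  have hDm : D m = δ m := sub_eq_zero.mp h'
  show D m = F₀.comp (P.flip m) - F₀.comp (P m)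
  rw [hDm]
  exact hδapp m

end ArensPaper
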